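/- Let s be a binary string of length n, w of length m ≤ n, N = n−m+1, and 0 < ε < 1. Let P be a set of at least N·m/ε distinct primes. If p is chosen uniformly from P, then the probability that there exists i ∈ {1,...,N} with s[i,i+m−1] ≠ w but h_p(s[i,i+m−1]) = h_p(w) is at most ε. -/
import Mathlib


def bval (b : Bool) : ℕ := if b then 1 else 0

def val : List Bool → ℕ
  | [] => 0
  | b :: t => bval b + 2 * val t

def hashp (p : ℕ) (u : List Bool) : ℕ := val u % p

def substr (s : List Bool) (i m : ℕ) : List Bool := (s.drop (i - 1)).take m

lemma val_lt (u : List Bool) : val u < 2 ^ u.length := by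
  induction u with
  | nil => simp [val]
  | cons b t ih =>
      simp only [val, List.length_cons, pow_succ]
      cases b <;> simp [bval] <;> omega

lemma val_inj : ∀ u v : List Bool, u.length = v.length → val u = val v → u = v := by
  intro u
  induction u with
  | nil => intro v h _; cases v <;> simp_all
  | cons b t ih =>
      intro v h hv
      cases v with
      | nil => simp at h
      | cons c r =>
        simp only [val] at hv
        have hb : b = c := by cases b <;> cases c <;> simp [bval] at hv ⊢ <;> omega
        have ht : val t = val r := by cases b <;> cases c <;> simp [bval] at hv <;> omega
        simp only [List.length_cons] at h
        rw [hb, ih r (by omega) ht]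

lemma primeFactors_card_le {d m : ℕ} (hd : d ≠ 0) (hlt : d < 2 ^ m) :
    d.primeFactors.card ≤ m := by
  have h1 : 2 ^ d.primeFactors.card ≤ ∏ p ∈ d.primeFactors, p := by
    apply Finset.pow_card_le_prod
    intro p hp
    exact (Nat.prime_of_mem_primeFactors hp).two_le
  have h2 : ∏ p ∈ d.primeFactors, p ≤ d :=
    Nat.le_of_dvd (Nat.pos_of_ne_zero hd) (Nat.prod_primeFactors_dvd d)
  have : 2 ^ d.primeFactors.card < 2 ^ m := lt_of_le_of_lt (h1.trans h2) hlt
  exact le_of_lt (by exact_mod_cast (Nat.pow_lt_pow_iff_right (by norm_num)).mp this)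

open Classical in
theorem stmt_10 (s w : List Bool) (n m N : ℕ)
    (hn : s.length = n) (hm : w.length = m) (hmn : m ≤ n) (hN : N = n - m + 1)
    (ε : ℝ) (hε0 : 0 < ε) (hε1 : ε < 1)
    (P : Finset ℕ) (hP : ∀ p ∈ P, p.Prime)
    (hcard : ((N * m : ℕ) : ℝ) / ε ≤ (P.card : ℝ)) :
    ((P.filter fun p =>  ∃ i, 1 ≤ i ∧ i ≤ N ∧ substr s i m ≠ w ∧
        hashp p (substr s i m) = hashp p w).card : ℝ) / (P.card : ℝ) ≤ ε := by
  classical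
  set B := P.filter fun p => ∃ i, 1 ≤ i ∧ i ≤ N ∧ substr s i m ≠ w ∧
      hashp p (substr s i m) = hashp p w with hB
  -- d i : the nonzero difference
  set d : ℕ → ℕ := fun i => ((val (substr s i m) : ℤ) - (val w : ℤ)).natAbs with hd
  have hsublen : ∀ i, 1 ≤ i → i ≤ N → (substr s i m).length = m := by
    intro i h1 h2
    simp only [substr, List.length_take, List.length_drop, hn]
    omega
  have hdprop : ∀ i, 1 ≤ i → i ≤ N → substr s i m ≠ w → d i ≠ 0 ∧ d i < 2 ^ m := by
    intro i h1 h2 hne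
    have hlen := hsublen i h1 h2
    have hneval : val (substr s i m) ≠ val w := by
      intro h
      exact hne (val_inj _ _ (by rw [hlen, hm]) h)
    have h1' : val (substr s i m) < 2 ^ m := by have := val_lt (substr s i m); rwa [hlen] at this
    have h2' : val w < 2 ^ m := by have := val_lt w; rwa [hm] at this
    constructor
    · simp only [hd, ne_eq, Int.natAbs_eq_zero, sub_eq_zero]
      exact_mod_cast hneval
    · simp only [hd]
      omega
  have hsubset : B ⊆ (Finset.Icc 1 N).biUnion fun i =>
      P.filter fun p => substr s i m ≠ w ∧ p ∣ d i := by
    intro p hp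
    simp only [hB, Finset.mem_filter] at hp
    obtain ⟨hpP, i, h1, h2, hne, hhash⟩ := hp
    simp only [Finset.mem_biUnion, Finset.mem_Icc, Finset.mem_filter]
    refine ⟨i, ⟨h1, h2⟩, hpP, hne, ?_⟩
    have hmod : val (substr s i m) ≡ val w [MOD p] := hhash
    have hdvd : (p : ℤ) ∣ (val w : ℤ) - (val (substr s i m) : ℤ) := Nat.modEq_iff_dvd.mp hmod
    have h3 := Int.natAbs_dvd_natAbs.mpr hdvd
    simp only [Int.natAbs_natCast] at h3
    rw [hd]
    rwa [← neg_sub, Int.natAbs_neg] at h3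
  have hcardNat : B.card ≤ N * m := by
    calc B.card ≤ ((Finset.Icc 1 N).biUnion fun i =>
          P.filter fun p => substr s i m ≠ w ∧ p ∣ d i).card := Finset.card_le_card hsubset
      _ ≤ ∑ i ∈ Finset.Icc 1 N, (P.filter fun p => substr s i m ≠ w ∧ p ∣ d i).card :=
          Finset.card_biUnion_le
      _ ≤ ∑ i ∈ Finset.Icc 1 N, m := by
          apply Finset.sum_le_sum
          intro i hi
          simp only [Finset.mem_Icc] at hi
          by_cases hne : substr s i m ≠ w
          · obtain ⟨hdne, hdlt⟩ := hdprop i hi.1 hi.2 hne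
            calc (P.filter fun p => substr s i m ≠ w ∧ p ∣ d i).card
                ≤ (d i).primeFactors.card := by
                  apply Finset.card_le_card
                  intro p hp
                  simp only [Finset.mem_filter] at hp
                  exact Nat.mem_primeFactors.mpr ⟨hP p hp.1, hp.2.2, hdne⟩
              _ ≤ m := primeFactors_card_le hdne hdlt
          · simp only [not_not] at hne
            have : (P.filter fun p => substr s i m ≠ w ∧ p ∣ d i) = ∅ := by
              apply Finset.filter_false_of_mem
              intro p _ h
              exact h.1 hne
            simp [this]
      _ ≤ N * m := by
          rw [Finset.sum_const, Nat.card_Icc, Nat.add_sub_cancel, smul_eq_mul]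
  -- real arithmetic
  have hNm : ((N * m : ℕ) : ℝ) ≤ ε * P.card := by
    rw [div_le_iff₀ hε0] at hcard
    linarith [hcard]
  rcases Nat.eq_zero_or_pos P.card with h0 | hpos
  · have : B.card = 0 := by
      have hle : B.card ≤ P.card := by rw [hB]; exact Finset.card_filter_le _ _
      omega
    rw [this]
    simp only [Nat.cast_zero, zero_div]
    positivity
  · have hposR : (0 : ℝ) < P.card := by exact_mod_cast hpos
    rw [div_le_iff₀ hposR]
    calc (B.card : ℝ) ≤ ((N * m : ℕ) : ℝ) := by exact_mod_cast hcardNat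
      _ ≤ ε * P.card := hNm
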